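/- The marginal integral of the product of Gaussian likelihoods against the Gaussian prior evaluates in closed form: ∫_{ℝ^n} (∏_{s∈D} N(z_s; H_s x, R_s)) · N(x; μ₀, P₀) dx = [det(P₀) det(M) ∏_{s∈D} (2π)^{m_s} det(R_s)]^{−1/2} · exp{−(1/2)(c − bᵀM⁻¹b)}. -/

import Mathlib

open Matrix MeasureTheory BigOperators

/-- The Gaussian density `N(x; μ, Σ) = (2π)^{−d/2} det(Σ)^{−1/2}
exp(−(1/2)(x−μ)ᵀΣ⁻¹(x−μ))`. -/
noncomputable def gaussPDF {d : ℕ} (μ : Fin d → ℝ) (S : Matrix (Fin d) (Fin d) ℝ)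
    (x : Fin d → ℝ) : ℝ :=
  (2 * Real.pi) ^ (-(d : ℝ) / 2) * S.det ^ (-(1 : ℝ) / 2) *
    Real.exp (-(1 / 2) * ((x - μ) ⬝ᵥ S⁻¹ *ᵥ (x - μ)))

section AuxLemmas

lemma herm_transpose {k : Type*} {A : Matrix k k ℝ} (h : A.IsHermitian) : Aᵀ = A := by
  rw [← Matrix.conjTranspose_eq_transpose_of_trivial]; exact h

lemma my_sum_mulVec {ι k l : Type*} [Fintype l] (s : Finset ι)
    (A : ι → Matrix k l ℝ) (v : l → ℝ) :
    (∑ i ∈ s, A i) *ᵥ v = ∑ i ∈ s, A i *ᵥ v := by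
  classical
  induction s using Finset.induction_on with
  | empty => simp [Matrix.zero_mulVec]
  | insert _ _ h ih => rw [Finset.sum_insert h, Finset.sum_insert h, Matrix.add_mulVec, ih]

lemma my_dotProduct_sum {ι k : Type*} [Fintype k] (s : Finset ι) (v : k → ℝ)
    (w : ι → k → ℝ) : v ⬝ᵥ (∑ i ∈ s, w i) = ∑ i ∈ s, v ⬝ᵥ w i := by
  classical
  induction s using Finset.induction_on with
  | empty => simp
  | insert _ _ h ih => rw [Finset.sum_insert h, Finset.sum_insert h, dotProduct_add, ih]

lemma my_sum_dotProduct {ι k : Type*} [Fintype k] (s : Finset ι) (v : k → ℝ)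
    (w : ι → k → ℝ) : (∑ i ∈ s, w i) ⬝ᵥ v = ∑ i ∈ s, w i ⬝ᵥ v := by
  classical
  induction s using Finset.induction_on with
  | empty => simp
  | insert _ _ h ih => rw [Finset.sum_insert h, Finset.sum_insert h, add_dotProduct, ih]

lemma my_posSemidef_sum {ι k : Type*} [Fintype k] (s : Finset ι)
    (f : ι → Matrix k k ℝ) (h : ∀ i ∈ s, (f i).PosSemidef) :
    (∑ i ∈ s, f i).PosSemidef := by
  classical
  induction s using Finset.induction_on with
  | empty => simpa using Matrix.PosSemidef.zero
  | @insert a s ha ih =>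
      rw [Finset.sum_insert ha]
      exact (h a (Finset.mem_insert_self a s)).add
        (ih fun i hi => h i (Finset.mem_insert_of_mem hi))

lemma vecMul_symm {k : Type*} [Fintype k] {S : Matrix k k ℝ} (hS : Sᵀ = S)
    (a : k → ℝ) : a ᵥ* S = S *ᵥ a := by
  rw [← Matrix.mulVec_transpose, hS]

lemma dot_symm {k : Type*} [Fintype k] {S : Matrix k k ℝ} (hS : Sᵀ = S)
    (a b : k → ℝ) : a ⬝ᵥ S *ᵥ b = (S *ᵥ a) ⬝ᵥ b := by
  rw [Matrix.dotProduct_mulVec, vecMul_symm hS]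

lemma quad_expand {k : Type*} [Fintype k] {S : Matrix k k ℝ} (hS : Sᵀ = S)
    (v w : k → ℝ) :
    (v - w) ⬝ᵥ S *ᵥ (v - w)
      = v ⬝ᵥ S *ᵥ v - 2 * ((S *ᵥ w) ⬝ᵥ v) + w ⬝ᵥ S *ᵥ w := by
  rw [Matrix.mulVec_sub, dotProduct_sub, sub_dotProduct, sub_dotProduct,
    show v ⬝ᵥ S *ᵥ w = (S *ᵥ w) ⬝ᵥ v from dotProduct_comm _ _,
    show w ⬝ᵥ S *ᵥ v = (S *ᵥ w) ⬝ᵥ v from dot_symm hS w v]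
  ring

lemma data_expand {n k : Type*} [Fintype n] [Fintype k]
    (Hs : Matrix k n ℝ) {S : Matrix k k ℝ} (hS : Sᵀ = S)
    (zs : k → ℝ) (x : n → ℝ) :
    (zs - Hs *ᵥ x) ⬝ᵥ S *ᵥ (zs - Hs *ᵥ x)
      = x ⬝ᵥ (Hsᵀ * S * Hs) *ᵥ x - 2 * ((Hsᵀ *ᵥ (S *ᵥ zs)) ⬝ᵥ x) + zs ⬝ᵥ S *ᵥ zs := by
  rw [quad_expand hS]
  have h1 : (S *ᵥ (Hs *ᵥ x)) ⬝ᵥ zs = (Hsᵀ *ᵥ (S *ᵥ zs)) ⬝ᵥ x := by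
    rw [dotProduct_comm, Matrix.dotProduct_mulVec, vecMul_symm hS,
      Matrix.dotProduct_mulVec, ← Matrix.mulVec_transpose]
  have h2 : (Hs *ᵥ x) ⬝ᵥ S *ᵥ (Hs *ᵥ x) = x ⬝ᵥ (Hsᵀ * S * Hs) *ᵥ x := by
    rw [← Matrix.mulVec_mulVec, ← Matrix.mulVec_mulVec,
      Matrix.dotProduct_mulVec x, Matrix.vecMul_transpose]
  rw [h1, h2]
  ring

open scoped MatrixOrder in
lemma integral_exp_neg_half_quad {k : ℕ} {M : Matrix (Fin k) (Fin k) ℝ} (hM : M.PosDef) :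
    ∫ x : Fin k → ℝ, Real.exp (-(1 / 2) * (x ⬝ᵥ M *ᵥ x))
      = Real.sqrt (2 * Real.pi) ^ k / Real.sqrt M.det := by
  classical
  set A := CFC.sqrt M with hA
  have hAt : Aᵀ = A := herm_transpose (CFC.sqrt_nonneg M).posSemidef.1
  have hAA : A * A = M := CFC.sqrt_mul_sqrt_self M hM.posSemidef.nonneg
  have hdet2 : A.det * A.det = M.det := by rw [← Matrix.det_mul, hAA]
  have hdM : (0 : ℝ) < M.det := hM.det_pos
  have hdA : A.det ≠ 0 := by
    intro h
    rw [h, zero_mul] at hdet2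
    exact hdM.ne' hdet2.symm
  have habs : |A.det| = Real.sqrt M.det := by
    rw [← hdet2, Real.sqrt_mul_self_eq_abs]
  have hquad : ∀ x : Fin k → ℝ, x ⬝ᵥ M *ᵥ x = (A *ᵥ x) ⬝ᵥ (A *ᵥ x) := by
    intro x
    rw [← hAA, ← Matrix.mulVec_mulVec, Matrix.dotProduct_mulVec, ← Matrix.mulVec_transpose, hAt]
  have hg : Continuous fun y : Fin k → ℝ => Real.exp (-(1 / 2) * (y ⬝ᵥ y)) := by
    refine Real.continuous_exp.comp (continuous_const.mul ?_)
    exact continuous_finset_sum _ fun i _ => (continuous_apply i).mul (continuous_apply i)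
  have hfdet : LinearMap.det (Matrix.toLin' A) ≠ 0 := by
    rw [LinearMap.det_toLin']; exact hdA
  have hmap : Measure.map (Matrix.toLin' A) volume
      = ENNReal.ofReal |A.det⁻¹| • volume := by
    rw [Measure.map_linearMap_addHaar_eq_smul_addHaar volume hfdet, LinearMap.det_toLin']
  have hmeas : AEMeasurable (Matrix.toLin' A) volume :=
    (LinearMap.continuous_of_finiteDimensional _).measurable.aemeasurable
  have hone : ∫ y : Fin k → ℝ, Real.exp (-(1 / 2) * (y ⬝ᵥ y))
      = Real.sqrt (2 * Real.pi) ^ k := by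
    have hsum : ∀ y : Fin k → ℝ, Real.exp (-(1 / 2) * (y ⬝ᵥ y))
        = ∏ i, Real.exp (-(1 / 2) * (y i ^ 2)) := by
      intro y
      rw [← Real.exp_sum]
      congr 1
      simp [dotProduct, Finset.mul_sum, sq]
    have h1 : ∫ t : ℝ, Real.exp (-(1 / 2) * t ^ 2) = Real.sqrt (2 * Real.pi) := by
      have h := integral_gaussian (1 / 2 : ℝ)
      rw [show Real.pi / (1 / 2 : ℝ) = 2 * Real.pi by ring] at h
      exact h
    simp_rw [hsum]
    rw [MeasureTheory.integral_fintype_prod_volume_eq_prod (ι := Fin k)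
      (f := fun _ t => Real.exp (-(1 / 2) * t ^ 2)), h1, Finset.prod_const,
      Finset.card_univ, Fintype.card_fin]
  calc ∫ x : Fin k → ℝ, Real.exp (-(1 / 2) * (x ⬝ᵥ M *ᵥ x))
      = ∫ x : Fin k → ℝ, Real.exp (-(1 / 2) * ((Matrix.toLin' A) x ⬝ᵥ (Matrix.toLin' A) x)) := by
        simp_rw [hquad, Matrix.toLin'_apply]
    _ = ∫ y : Fin k → ℝ, Real.exp (-(1 / 2) * (y ⬝ᵥ y))
          ∂(Measure.map (Matrix.toLin' A) volume) :=
        (integral_map hmeas hg.aestronglyMeasurable).symm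
    _ = |A.det⁻¹| * ∫ y : Fin k → ℝ, Real.exp (-(1 / 2) * (y ⬝ᵥ y)) := by
        rw [hmap, integral_smul_measure, ENNReal.toReal_ofReal (abs_nonneg _), smul_eq_mul]
    _ = Real.sqrt (2 * Real.pi) ^ k / Real.sqrt M.det := by
        rw [hone, abs_inv, habs, div_eq_mul_inv, mul_comm]

end AuxLemmas

/-- Closed form of the marginal integral:
`∫ (∏ s, N(z_s; H_s x, R_s)) · N(x; μ₀, P₀) dx
  = [det(P₀) det(M) ∏ s, (2π)^{m_s} det(R_s)]^{−1/2} · exp{−(1/2)(c − bᵀM⁻¹b)}`. -/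
theorem gaussian_marginal_integral
    {n : ℕ} (hn : 1 ≤ n) {D : Type*} [Fintype D]
    (m : D → ℕ) (hm : ∀ s, 1 ≤ m s)
    (μ₀ : Fin n → ℝ)
    (P₀ : Matrix (Fin n) (Fin n) ℝ) (hP₀ : P₀.PosDef)
    (H : ∀ s, Matrix (Fin (m s)) (Fin n) ℝ)
    (R : ∀ s, Matrix (Fin (m s)) (Fin (m s)) ℝ) (hR : ∀ s, (R s).PosDef)
    (z : ∀ s, Fin (m s) → ℝ)
    (M : Matrix (Fin n) (Fin n) ℝ) (b : Fin n → ℝ) (c : ℝ)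
    (hM : M = P₀⁻¹ + ∑ s, (H s)ᵀ * (R s)⁻¹ * H s)
    (hb : b = P₀⁻¹ *ᵥ μ₀ + ∑ s, (H s)ᵀ *ᵥ ((R s)⁻¹ *ᵥ z s))
    (hc : c = μ₀ ⬝ᵥ P₀⁻¹ *ᵥ μ₀ + ∑ s, z s ⬝ᵥ (R s)⁻¹ *ᵥ z s) :
    ∫ x : Fin n → ℝ, (∏ s, gaussPDF (H s *ᵥ x) (R s) (z s)) * gaussPDF μ₀ P₀ x =
      (P₀.det * M.det * ∏ s, (2 * Real.pi) ^ (m s : ℝ) * (R s).det) ^ (-(1 : ℝ) / 2)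
        * Real.exp (-(1 / 2) * (c - b ⬝ᵥ M⁻¹ *ᵥ b)) := by
  classical
  have hπ : (0 : ℝ) < 2 * Real.pi := by positivity
  have hPd : (0 : ℝ) < P₀.det := hP₀.det_pos
  have hRd : ∀ s, (0 : ℝ) < (R s).det := fun s => (hR s).det_pos
  have hP₀invT : (P₀⁻¹)ᵀ = P₀⁻¹ := herm_transpose hP₀.inv.1
  have hRinvT : ∀ s, ((R s)⁻¹)ᵀ = (R s)⁻¹ := fun s => herm_transpose (hR s).inv.1
  have hMpd : M.PosDef := by
    rw [hM]
    refine hP₀.inv.add_posSemidef (my_posSemidef_sum _ _ fun s _ => ?_)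
    have := (hR s).inv.posSemidef.conjTranspose_mul_mul_same (H s)
    rwa [Matrix.conjTranspose_eq_transpose_of_trivial] at this
  have hMT : Mᵀ = M := herm_transpose hMpd.1
  have hMdet : (0 : ℝ) < M.det := hMpd.det_pos
  set μc : Fin n → ℝ := M⁻¹ *ᵥ b with hμc
  have hMμc : M *ᵥ μc = b := by
    rw [hμc, Matrix.mulVec_mulVec, Matrix.mul_nonsing_inv _ (isUnit_iff_ne_zero.mpr hMdet.ne'), Matrix.one_mulVec]
  set kq : ℝ := c - b ⬝ᵥ M⁻¹ *ᵥ b with hkq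
  -- the quadratic identity
  have hquad : ∀ x : Fin n → ℝ,
      ((x - μ₀) ⬝ᵥ P₀⁻¹ *ᵥ (x - μ₀))
          + ∑ s, (z s - H s *ᵥ x) ⬝ᵥ (R s)⁻¹ *ᵥ (z s - H s *ᵥ x)
        = (x - μc) ⬝ᵥ M *ᵥ (x - μc) + kq := by
    intro x
    have hMx : x ⬝ᵥ M *ᵥ x
        = x ⬝ᵥ P₀⁻¹ *ᵥ x + ∑ s, x ⬝ᵥ ((H s)ᵀ * (R s)⁻¹ * H s) *ᵥ x := by
      rw [hM, Matrix.add_mulVec, dotProduct_add, my_sum_mulVec, my_dotProduct_sum]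
    have hbx : b ⬝ᵥ x
        = (P₀⁻¹ *ᵥ μ₀) ⬝ᵥ x + ∑ s, ((H s)ᵀ *ᵥ ((R s)⁻¹ *ᵥ z s)) ⬝ᵥ x := by
      rw [hb, add_dotProduct, my_sum_dotProduct]
    have hμcb : μc ⬝ᵥ M *ᵥ μc = b ⬝ᵥ M⁻¹ *ᵥ b := by
      rw [hMμc, dotProduct_comm, hμc]
    have hP0q : (x - μ₀) ⬝ᵥ P₀⁻¹ *ᵥ (x - μ₀)
        = x ⬝ᵥ P₀⁻¹ *ᵥ x - 2 * ((P₀⁻¹ *ᵥ μ₀) ⬝ᵥ x) + μ₀ ⬝ᵥ P₀⁻¹ *ᵥ μ₀ :=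
      quad_expand hP₀invT x μ₀
    have hMq : (x - μc) ⬝ᵥ M *ᵥ (x - μc)
        = x ⬝ᵥ M *ᵥ x - 2 * ((M *ᵥ μc) ⬝ᵥ x) + μc ⬝ᵥ M *ᵥ μc :=
      quad_expand hMT x μc
    rw [hP0q, hMq, hμcb, hMμc, hMx, hbx, hkq, hc]
    simp only [fun s => data_expand (H s) (hRinvT s) (z s) x]
    rw [Finset.sum_add_distrib, Finset.sum_sub_distrib, ← Finset.mul_sum]
    ring
  -- rewrite the integrand
  set CC : ℝ := ((2 * Real.pi) ^ (-(n : ℝ) / 2) * P₀.det ^ (-(1 : ℝ) / 2))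
      * ∏ s, ((2 * Real.pi) ^ (-(m s : ℝ) / 2) * (R s).det ^ (-(1 : ℝ) / 2)) with hCC
  have hsplit : ∀ x : Fin n → ℝ,
      (∏ s, gaussPDF (H s *ᵥ x) (R s) (z s)) * gaussPDF μ₀ P₀ x
        = CC * (Real.exp (-(1 / 2) * ((x - μ₀) ⬝ᵥ P₀⁻¹ *ᵥ (x - μ₀)))
            * Real.exp (∑ s, -(1 / 2) * ((z s - H s *ᵥ x) ⬝ᵥ (R s)⁻¹ *ᵥ (z s - H s *ᵥ x)))) := by
    intro x
    simp only [gaussPDF, hCC]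
    rw [Finset.prod_mul_distrib, Real.exp_sum]
    ring
  have hint : ∀ x : Fin n → ℝ,
      (∏ s, gaussPDF (H s *ᵥ x) (R s) (z s)) * gaussPDF μ₀ P₀ x
        = (CC * Real.exp (-(1 / 2) * kq))
            * Real.exp (-(1 / 2) * ((x - μc) ⬝ᵥ M *ᵥ (x - μc))) := by
    intro x
    have hrhs : (CC * Real.exp (-(1 / 2) * kq))
          * Real.exp (-(1 / 2) * ((x - μc) ⬝ᵥ M *ᵥ (x - μc)))
        = CC * Real.exp (-(1 / 2) * kq + -(1 / 2) * ((x - μc) ⬝ᵥ M *ᵥ (x - μc))) := by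
      rw [Real.exp_add]; ring
    rw [hsplit x, ← Real.exp_add, ← Finset.mul_sum, hrhs]
    congr 2
    have h := hquad x
    linarith
  -- compute the integral
  have hICC : ∫ x : Fin n → ℝ, (∏ s, gaussPDF (H s *ᵥ x) (R s) (z s)) * gaussPDF μ₀ P₀ x
      = (CC * Real.exp (-(1 / 2) * kq))
          * (Real.sqrt (2 * Real.pi) ^ n / Real.sqrt M.det) := by
    simp_rw [hint]
    rw [MeasureTheory.integral_const_mul]
    congr 1
    rw [show (∫ x : Fin n → ℝ, Real.exp (-(1 / 2) * ((x - μc) ⬝ᵥ M *ᵥ (x - μc))))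
        = ∫ x : Fin n → ℝ, Real.exp (-(1 / 2) * (x ⬝ᵥ M *ᵥ x)) from
      integral_sub_right_eq_self (fun y => Real.exp (-(1 / 2) * (y ⬝ᵥ M *ᵥ y))) μc]
    exact integral_exp_neg_half_quad hMpd
  rw [hICC]
  -- constants
  have hconst : CC * (Real.sqrt (2 * Real.pi) ^ n / Real.sqrt M.det)
      = (P₀.det * M.det * ∏ s, (2 * Real.pi) ^ (m s : ℝ) * (R s).det) ^ (-(1 : ℝ) / 2) := by
    have hpos : ∀ s ∈ (Finset.univ : Finset D),
        (0 : ℝ) ≤ (2 * Real.pi) ^ (m s : ℝ) * (R s).det :=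
      fun s _ => (mul_pos (Real.rpow_pos_of_pos hπ _) (hRd s)).le
    have hprodpos : (0 : ℝ) ≤ ∏ s, (2 * Real.pi) ^ (m s : ℝ) * (R s).det :=
      Finset.prod_nonneg hpos
    rw [Real.mul_rpow (mul_pos hPd hMdet).le hprodpos, Real.mul_rpow hPd.le hMdet.le,
      ← Real.finset_prod_rpow _ _ hpos _]
    have hfac : ∀ s : D, ((2 * Real.pi) ^ (m s : ℝ) * (R s).det) ^ (-(1 : ℝ) / 2)
        = (2 * Real.pi) ^ (-(m s : ℝ) / 2) * (R s).det ^ (-(1 : ℝ) / 2) := by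
      intro s
      rw [Real.mul_rpow (by positivity) (hRd s).le, ← Real.rpow_mul hπ.le,
        show (m s : ℝ) * (-(1 : ℝ) / 2) = -(m s : ℝ) / 2 by ring]
    simp only [hfac]
    have hs1 : Real.sqrt (2 * Real.pi) ^ n = (2 * Real.pi) ^ ((n : ℝ) / 2) := by
      rw [Real.sqrt_eq_rpow, ← Real.rpow_natCast ((2 * Real.pi) ^ ((1 : ℝ) / 2)) n,
        ← Real.rpow_mul hπ.le, show (1 : ℝ) / 2 * (n : ℝ) = (n : ℝ) / 2 by ring]
    have hs2 : (2 * Real.pi) ^ (-(n : ℝ) / 2) * (2 * Real.pi) ^ ((n : ℝ) / 2) = 1 := by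
      rw [← Real.rpow_add hπ, show -(n : ℝ) / 2 + (n : ℝ) / 2 = 0 by ring, Real.rpow_zero]
    have hs3 : (Real.sqrt M.det)⁻¹ = M.det ^ (-(1 : ℝ) / 2) := by
      rw [Real.sqrt_eq_rpow, ← Real.rpow_neg hMdet.le,
        show -((1 : ℝ) / 2) = -(1 : ℝ) / 2 by ring]
    have hs3' : ∀ a : ℝ, a / Real.sqrt M.det = a * M.det ^ (-(1 : ℝ) / 2) := fun a => by
      rw [div_eq_mul_inv, hs3]
    rw [hCC, hs1, hs3']
    calc ((2 * Real.pi) ^ (-(n : ℝ) / 2) * P₀.det ^ (-(1 : ℝ) / 2))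
          * (∏ s, (2 * Real.pi) ^ (-(m s : ℝ) / 2) * (R s).det ^ (-(1 : ℝ) / 2))
          * ((2 * Real.pi) ^ ((n : ℝ) / 2) * M.det ^ (-(1 : ℝ) / 2))
        = ((2 * Real.pi) ^ (-(n : ℝ) / 2) * (2 * Real.pi) ^ ((n : ℝ) / 2))
          * (P₀.det ^ (-(1 : ℝ) / 2) * M.det ^ (-(1 : ℝ) / 2)
            * ∏ s, (2 * Real.pi) ^ (-(m s : ℝ) / 2) * (R s).det ^ (-(1 : ℝ) / 2)) := by ring
      _ = P₀.det ^ (-(1 : ℝ) / 2) * M.det ^ (-(1 : ℝ) / 2)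
            * ∏ s, (2 * Real.pi) ^ (-(m s : ℝ) / 2) * (R s).det ^ (-(1 : ℝ) / 2) := by
          rw [hs2, one_mul]
  rw [← hconst]
  ring
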